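/- arXiv:2510.07746 — 5 statements merged into one kernel-verified Lean document; each statement's English description precedes it below -/
import Mathlib

section
/- Fix any n ≥ 1. For every n-point dataset X = {x_1,…,x_n} ⊂ ℝ^{n−1} and every constant C ≥ 0, there exists an n-point dataset X_{+C} = {x'_1,…,x'_n} ⊂ ℝ^{n−1} such that ‖x'_i − x'_j‖² = ‖x_i − x_j‖² + C for all i ≠ j. -/
open scoped BigOperators RealInnerProductSpace
noncomputable section

namespace TSNEPaper

variable {n k : ℕ} {E F : Type*}

/-- The set of nearest neighbors of point `i` (used for the `σ = 0` limit of the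
conditional affinity). -/
def nearestSet [NormedAddCommGroup E] (X : Fin n → E) (i : Fin n) : Finset (Fin n) :=
  (Finset.univ.erase i).filter fun j => ∀ l ∈ Finset.univ.erase i, ‖X i - X j‖ ≤ ‖X i - X l‖

/-- Conditional t-SNE affinity `P_{j|i}(X; σ)`.  For `σ = 0` we take the limiting value
as `σ → 0⁺`, which puts equal mass on the nearest neighbors of `i`. -/
def condAffinity [NormedAddCommGroup E] (X : Fin n → E) (σ : ℝ) (i j : Fin n) : ℝ :=
  if j = i then 0
  else if σ = 0 then (if j ∈ nearestSet X i then ((nearestSet X i).card : ℝ)⁻¹ else 0)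
  else Real.exp (-‖X i - X j‖ ^ 2 / (2 * σ ^ 2)) /
      ∑ l ∈ Finset.univ.erase i, Real.exp (-‖X i - X l‖ ^ 2 / (2 * σ ^ 2))

/-- Base-2 Shannon entropy of a distribution on `Fin n`. -/
def entropy2 (p : Fin n → ℝ) : ℝ := -∑ j, p j * Real.logb 2 (p j)

/-- `σ` is a perplexity-`ρ`-calibrated bandwidth for point `i`: it is nonnegative and
minimizes the gap between the entropy of `P_{·|i}(X;σ)` and `log₂ ρ`. -/
def IsCalibrated [NormedAddCommGroup E] (X : Fin n → E) (ρ : ℝ) (i : Fin n) (σ : ℝ) : Prop :=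
  0 ≤ σ ∧ ∀ σ' : ℝ, 0 ≤ σ' →
    |entropy2 (condAffinity X σ i) - Real.logb 2 ρ| ≤
      |entropy2 (condAffinity X σ' i) - Real.logb 2 ρ|

/-- The calibrated bandwidth `σ_i^*` (well defined by uniqueness of the minimizer). -/
def sigmaStar [NormedAddCommGroup E] (X : Fin n → E) (ρ : ℝ) (i : Fin n) : ℝ :=
  Classical.epsilon (IsCalibrated X ρ i)

/-- Symmetrized input affinity `P_{ij}(X)`. -/
def inAffinity [NormedAddCommGroup E] (X : Fin n → E) (ρ : ℝ) (i j : Fin n) : ℝ :=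
  if i = j then 0
  else (condAffinity X (sigmaStar X ρ j) j i + condAffinity X (sigmaStar X ρ i) i j) / (2 * n)

/-- Output affinity `Q_{ij}(Y)`. -/
def outAffinity [NormedAddCommGroup F] (Y : Fin n → F) (i j : Fin n) : ℝ :=
  if i = j then 0
  else (1 + ‖Y i - Y j‖ ^ 2)⁻¹ /
    ∑ p ∈ Finset.univ.offDiag, (1 + ‖Y p.1 - Y p.2‖ ^ 2)⁻¹

/-- The t-SNE loss `L_X(Y) = KL(P(X) ‖ Q(Y))`. -/
def tsneLoss {d : ℕ} [NormedAddCommGroup E] (X : Fin n → E) (ρ : ℝ)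
    (Y : Fin n → EuclideanSpace ℝ (Fin d)) : ℝ :=
  ∑ p ∈ Finset.univ.offDiag,
    inAffinity X ρ p.1 p.2 * Real.log (inAffinity X ρ p.1 p.2 / outAffinity Y p.1 p.2)

/-- The set of stationary t-SNE outputs in `ℝ^d` for input `X` and perplexity `ρ`. -/
def TSNE [NormedAddCommGroup E] (d : ℕ) (ρ : ℝ) (X : Fin n → E) :
    Set (Fin n → EuclideanSpace ℝ (Fin d)) :=
  {Y : Fin n → EuclideanSpace ℝ (Fin d) | fderiv ℝ (tsneLoss X ρ) Y = 0}

/-- The image of t-SNE: all stationary outputs over all `n`-point inputs in `ℝ^{n-1}`. -/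
def IMTSNE (n d : ℕ) (ρ : ℝ) : Set (Fin n → EuclideanSpace ℝ (Fin d)) :=
  ⋃ X : Fin n → EuclideanSpace ℝ (Fin (n - 1)), TSNE d ρ X

/-- The `m`-th cluster of the partition of `[n]` encoded by the labelling `ℓ`. -/
def cluster (ℓ : Fin n → Fin k) (m : Fin k) : Finset (Fin n) :=
  Finset.univ.filter fun i => ℓ i = m

/-- Average within-cluster distance `a(i)`. -/
def aScore [NormedAddCommGroup E] (X : Fin n → E) (ℓ : Fin n → Fin k) (i : Fin n) : ℝ :=
  (∑ j ∈ cluster ℓ (ℓ i), ‖X i - X j‖) / (((cluster ℓ (ℓ i)).card : ℝ) - 1)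

/-- Closest average across-cluster distance `b(i)`. -/
def bScore [NormedAddCommGroup E] (X : Fin n → E) (ℓ : Fin n → Fin k) (i : Fin n) : ℝ :=
  sInf {r : ℝ | ∃ m : Fin k, m ≠ ℓ i ∧
    r = (∑ j ∈ cluster ℓ m, ‖X i - X j‖) / ((cluster ℓ m).card : ℝ)}

/-- Silhouette score of point `i`. -/
def silhouette [NormedAddCommGroup E] (X : Fin n → E) (ℓ : Fin n → Fin k) (i : Fin n) : ℝ :=
  if (cluster ℓ (ℓ i)).card = 1 then 0
  else (bScore X ℓ i - aScore X ℓ i) / max (aScore X ℓ i) (bScore X ℓ i)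

/-- Average silhouette score `S̄(X; C₁,…,C_k)`. -/
def avgSilhouette [NormedAddCommGroup E] (X : Fin n → E) (ℓ : Fin n → Fin k) : ℝ :=
  (∑ i, silhouette X ℓ i) / (n : ℝ)

/-- Centroid `E(S)` of the points indexed by `S`. -/
def centroid [NormedAddCommGroup E] [NormedSpace ℝ E] (X : Fin n → E)
    (S : Finset (Fin n)) : E :=
  ((S.card : ℝ))⁻¹ • ∑ i ∈ S, X i

/-- Numerator (between-cluster term) of the Calinski–Harabasz index. -/
def chNum [NormedAddCommGroup E] [NormedSpace ℝ E] (X : Fin n → E) (ℓ : Fin n → Fin k) : ℝ :=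
  ((k : ℝ) - 1)⁻¹ *
    ∑ m : Fin k, ((cluster ℓ m).card : ℝ) *
      ‖centroid X (cluster ℓ m) - centroid X Finset.univ‖ ^ 2

/-- Denominator (within-cluster term) of the Calinski–Harabasz index. -/
def chDen [NormedAddCommGroup E] [NormedSpace ℝ E] (X : Fin n → E) (ℓ : Fin n → Fin k) : ℝ :=
  ((n : ℝ) - (k : ℝ))⁻¹ *
    ∑ m : Fin k, ∑ i ∈ cluster ℓ m, ‖X i - centroid X (cluster ℓ m)‖ ^ 2

/-- Calinski–Harabasz index, valued in `[0,∞]`, with the conventions `CH = 1` when both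
numerator and denominator vanish and `CH = ∞` when only the denominator vanishes. -/
def CHindex [NormedAddCommGroup E] [NormedSpace ℝ E] (X : Fin n → E) (ℓ : Fin n → Fin k) :
    EReal :=
  if chDen X ℓ = 0 then (if chNum X ℓ = 0 then 1 else ⊤)
  else ((chNum X ℓ / chDen X ℓ : ℝ) : EReal)

/-- Minimum between-cluster distance (numerator of the Dunn index). -/
def diNum [NormedAddCommGroup E] (X : Fin n → E) (ℓ : Fin n → Fin k) : ℝ :=
  sInf {r : ℝ | ∃ i j : Fin n, ℓ i ≠ ℓ j ∧ r = ‖X i - X j‖}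

/-- Maximum within-cluster distance (denominator of the Dunn index). -/
def diDen [NormedAddCommGroup E] (X : Fin n → E) (ℓ : Fin n → Fin k) : ℝ :=
  sSup {r : ℝ | ∃ i j : Fin n, ℓ i = ℓ j ∧ r = ‖X i - X j‖}

/-- Dunn index, valued in `[0,∞]`, with the conventions `DI = 1` when both numerator and
denominator vanish and `DI = ∞` when only the denominator vanishes. -/
def DIindex [NormedAddCommGroup E] (X : Fin n → E) (ℓ : Fin n → Fin k) : EReal :=
  if diDen X ℓ = 0 then (if diNum X ℓ = 0 then 1 else ⊤)
  else ((diNum X ℓ / diDen X ℓ : ℝ) : EReal)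

/-- `Y` is an `(α, Y i₀)`-outlier configuration: there is a hyperplane (with unit normal `v`)
separating `Y i₀` from the remaining points with margin width at least
`α · max{1, diam(Y ∖ {Y i₀})}`. -/
def IsOutlierConfig [NormedAddCommGroup F] [InnerProductSpace ℝ F] (Y : Fin n → F)
    (i0 : Fin n) (α : ℝ) : Prop :=
  0 < α ∧ ∃ v : F, ‖v‖ = 1 ∧ ∀ i : Fin n, i ≠ i0 →
    α * max 1 (Metric.diam (Y '' {i : Fin n | i ≠ i0})) ≤ ⟪Y i - Y i0, v⟫

/-- The outlier number `α(Y, y₀)`: the largest `α` for which `Y` is an `(α, Y i₀)`-outlier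
configuration (`0` if there is none). -/
def outlierNumber [NormedAddCommGroup F] [InnerProductSpace ℝ F] (Y : Fin n → F)
    (i0 : Fin n) : ℝ :=
  sSup {α : ℝ | IsOutlierConfig Y i0 α}


lemma prod_norm_sq_l2 {E F : Type*} [NormedAddCommGroup E] [InnerProductSpace ℝ E]
    [NormedAddCommGroup F] [InnerProductSpace ℝ F] (x : WithLp 2 (E × F)) :
    ‖x‖ ^ 2 = ‖x.fst‖ ^ 2 + ‖x.snd‖ ^ 2 := by
  rw [← real_inner_self_eq_norm_sq, WithLp.prod_inner_apply, real_inner_self_eq_norm_sq,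
    real_inner_self_eq_norm_sq]
  rfl

lemma exists_realization_aux (n : ℕ) (hn : 1 ≤ n) {G : Type*} [NormedAddCommGroup G]
    [InnerProductSpace ℝ G] [FiniteDimensional ℝ G] (w : Fin n → G)
    (hsum : ∑ i, w i = 0) :
    ∃ X' : Fin n → EuclideanSpace ℝ (Fin (n - 1)),
      ∀ i j : Fin n, ‖X' i - X' j‖ = ‖w i - w j‖ := by
  classical
  set S : Submodule ℝ G := Submodule.span ℝ (Set.range w) with hS
  have hmem : ∀ i, w i ∈ S := fun i => Submodule.subset_span (Set.mem_range_self i)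
  let i0 : Fin n := ⟨0, hn⟩
  set s : Finset G := (Finset.univ.erase i0).image w with hs
  have hcard : s.card ≤ n - 1 := by
    refine le_trans Finset.card_image_le ?_
    simp [Finset.card_erase_of_mem]
  have hsub : ∀ i : Fin n, i ≠ i0 → w i ∈ Submodule.span ℝ (s : Set G) := fun i hi =>
    Submodule.subset_span (Finset.mem_coe.mpr
      (Finset.mem_image_of_mem w (Finset.mem_erase.mpr ⟨hi, Finset.mem_univ i⟩)))
  have hle : S ≤ Submodule.span ℝ (s : Set G) := by
    rw [hS, Submodule.span_le]
    rintro x ⟨i, rfl⟩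
    by_cases hi : i = i0
    · subst hi
      have h0 : w i0 + ∑ j ∈ Finset.univ.erase i0, w j = 0 := by
        rw [Finset.add_sum_erase _ _ (Finset.mem_univ i0)]; exact hsum
      have h1 : w i0 = -∑ j ∈ Finset.univ.erase i0, w j := by
        rw [eq_neg_iff_add_eq_zero]; exact h0
      rw [h1]
      exact Submodule.neg_mem _ (Submodule.sum_mem _ fun j hj =>
        hsub j (Finset.mem_erase.mp hj).1)
    · exact hsub i hi
  have hrank : Module.finrank ℝ S ≤ n - 1 :=
    le_trans (Submodule.finrank_mono hle) (le_trans (finrank_span_finset_le_card s) hcard)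
  -- isometry from S into ℝ^{n-1}
  set m0 := Module.finrank ℝ S with hm0
  have B : OrthonormalBasis (Fin m0) ℝ S := stdOrthonormalBasis ℝ S
  let fam : Fin m0 → EuclideanSpace ℝ (Fin (n - 1)) :=
    fun i => EuclideanSpace.single (Fin.castLE hrank i) (1 : ℝ)
  have horth : Orthonormal ℝ fam :=
    (EuclideanSpace.orthonormal_single (𝕜 := ℝ) (ι := Fin (n - 1))).comp _ (Fin.castLE_injective hrank)
  let f : S →ₗ[ℝ] EuclideanSpace ℝ (Fin (n - 1)) := B.toBasis.constr ℝ fam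
  have hf : Orthonormal ℝ (f ∘ B.toBasis) := by
    have : f ∘ B.toBasis = fam := funext fun i => B.toBasis.constr_basis ℝ fam i
    rw [this]; exact horth
  have hv : Orthonormal ℝ (⇑B.toBasis) := by rw [B.coe_toBasis]; exact B.orthonormal
  let L := f.isometryOfOrthonormal hv hf
  refine ⟨fun i => L ⟨w i, hmem i⟩, fun i j => ?_⟩
  have : L ⟨w i, hmem i⟩ - L ⟨w j, hmem j⟩ = L (⟨w i, hmem i⟩ - ⟨w j, hmem j⟩) :=
    (map_sub L _ _).symm
  rw [this, L.norm_map]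
  rfl

/-- Lemma `X+C_exists`: for any dataset of `n` points in `ℝ^{n-1}` and any
`C ≥ 0` there is a dataset in `ℝ^{n-1}` whose squared interpoint distances are the original
ones plus `C`. -/
theorem plusC_exists (n : ℕ) (hn : 1 ≤ n)
    (X : Fin n → EuclideanSpace ℝ (Fin (n - 1))) (C : ℝ) (hC : 0 ≤ C) :
    ∃ X' : Fin n → EuclideanSpace ℝ (Fin (n - 1)),
      ∀ i j : Fin n, i ≠ j → ‖X' i - X' j‖ ^ 2 = ‖X i - X j‖ ^ 2 + C := by
  classical
  set c : ℝ := Real.sqrt (C / 2) with hc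
  have hc2 : c ^ 2 = C / 2 := Real.sq_sqrt (by linarith)
  set G := WithLp 2 ((EuclideanSpace ℝ (Fin (n - 1))) × (EuclideanSpace ℝ (Fin n))) with hG
  let z : Fin n → G := fun i =>
    (WithLp.equiv 2 _).symm (X i, c • EuclideanSpace.single i (1 : ℝ))
  have hzsub : ∀ i j : Fin n, i ≠ j → ‖z i - z j‖ ^ 2 = ‖X i - X j‖ ^ 2 + C := by
    intro i j hij
    have h1 : (z i - z j).fst = X i - X j := rfl
    have h2 : (z i - z j).snd
        = c • (EuclideanSpace.single i (1 : ℝ) - EuclideanSpace.single j (1 : ℝ)) := by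
      show c • EuclideanSpace.single i (1 : ℝ) - c • EuclideanSpace.single j (1 : ℝ) = _
      rw [smul_sub]
    have hsingle : ‖(EuclideanSpace.single i (1 : ℝ) : EuclideanSpace ℝ (Fin n))
        - EuclideanSpace.single j (1 : ℝ)‖ ^ 2 = 2 := by
      rw [norm_sub_sq_real, EuclideanSpace.norm_single, EuclideanSpace.norm_single,
        EuclideanSpace.inner_single_left]
      simp [EuclideanSpace.single_apply, hij.symm]
      norm_num
    rw [prod_norm_sq_l2, h1, h2, norm_smul, mul_pow, hsingle]
    simp only [Real.norm_eq_abs, sq_abs]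
    rw [hc2]; ring
  let m : G := (n : ℝ)⁻¹ • ∑ i, z i
  let w : Fin n → G := fun i => z i - m
  have hnne : (n : ℝ) ≠ 0 := by positivity
  have hsum : ∑ i, w i = 0 := by
    show ∑ i, (z i - m) = 0
    rw [Finset.sum_sub_distrib, Finset.sum_const, Finset.card_univ, Fintype.card_fin,
      sub_eq_zero]
    show ∑ i, z i = n • ((n : ℝ)⁻¹ • ∑ i, z i)
    rw [← Nat.cast_smul_eq_nsmul ℝ, smul_smul, mul_inv_cancel₀ hnne, one_smul]
  obtain ⟨X', hX'⟩ := exists_realization_aux n hn w hsum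
  refine ⟨X', fun i j hij => ?_⟩
  rw [hX' i j]
  have : w i - w j = z i - z j := by show z i - m - (z j - m) = z i - z j; abel
  rw [this, hzsub i j hij]

end TSNEPaper
end
end

section
/- Fix any n > 2. For every n-point dataset X ⊂ ℝ^{n−1}, every perplexity ρ ∈ (1, n−1), and every C ≥ 0, letting X_{+C} ⊂ ℝ^{n−1} be any n-point dataset with ‖(X_{+C})_i − (X_{+C})_j‖² = ‖x_i − x_j‖² + C for all i ≠ j, one has TSNE_ρ(X) = TSNE_ρ(X_{+C}): the set of stationary t-SNE outputs is invariant under adding a constant to all squared interpoint distances of the input. -/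
open scoped BigOperators RealInnerProductSpace
noncomputable section

namespace TSNEPaper

variable {n k : ℕ} {E F : Type*}

/-- Lemma `tSNE_additive_invariance`: the set of stationary t-SNE outputs is
invariant under adding a constant to all squared interpoint distances of the input. -/
theorem tSNE_additive_invariance (n d : ℕ) (hn : 2 < n) (hd : 1 ≤ d)
    (X XC : Fin n → EuclideanSpace ℝ (Fin (n - 1)))
    (ρ C : ℝ) (hρ : 1 < ρ) (hρ' : ρ < (n : ℝ) - 1) (hC : 0 ≤ C)
    (hdist : ∀ i j : Fin n, i ≠ j → ‖XC i - XC j‖ ^ 2 = ‖X i - X j‖ ^ 2 + C) :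
    TSNE d ρ X = TSNE d ρ XC := by
  have hiff : ∀ i j l : Fin n, j ≠ i → l ≠ i →
      (‖XC i - XC j‖ ≤ ‖XC i - XC l‖ ↔ ‖X i - X j‖ ≤ ‖X i - X l‖) := by
    intro i j l hj hl
    rw [← pow_le_pow_iff_left₀ (norm_nonneg _) (norm_nonneg _) (two_ne_zero),
      ← pow_le_pow_iff_left₀ (n := 2) (norm_nonneg (X i - X j)) (norm_nonneg (X i - X l))
        (two_ne_zero),
      hdist i j (Ne.symm hj), hdist i l (Ne.symm hl), add_le_add_iff_right]
  have hns : ∀ i, nearestSet XC i = nearestSet X i := by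
    intro i
    unfold nearestSet
    apply Finset.filter_congr
    intro j hj
    have hj' : j ≠ i := (Finset.mem_erase.1 hj).1
    constructor
    · intro h l hl
      exact (hiff i j l hj' (Finset.mem_erase.1 hl).1).1 (h l hl)
    · intro h l hl
      exact (hiff i j l hj' (Finset.mem_erase.1 hl).1).2 (h l hl)
  have hcond : ∀ σ (i j : Fin n), condAffinity XC σ i j = condAffinity X σ i j := by
    intro σ i j
    unfold condAffinity
    by_cases hji : j = i
    · simp [hji]
    · simp only [hji, if_false]
      by_cases hσ : σ = 0
      · simp [hσ, hns]
      · simp only [hσ, if_false]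
        have hexp : ∀ l : Fin n, l ≠ i →
            Real.exp (-‖XC i - XC l‖ ^ 2 / (2 * σ ^ 2)) =
              Real.exp (-C / (2 * σ ^ 2)) * Real.exp (-‖X i - X l‖ ^ 2 / (2 * σ ^ 2)) := by
          intro l hl
          rw [← Real.exp_add, hdist i l (Ne.symm hl)]
          congr 1
          ring
        rw [hexp j hji,
          Finset.sum_congr rfl (fun l hl => hexp l (Finset.ne_of_mem_erase hl)),
          ← Finset.mul_sum, mul_div_mul_left _ _ (Real.exp_ne_zero _)]
  have hent : ∀ σ (i : Fin n), entropy2 (condAffinity XC σ i) = entropy2 (condAffinity X σ i) := by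
    intro σ i
    unfold entropy2
    simp only [hcond]
  have hcal : IsCalibrated XC ρ = IsCalibrated X ρ := by
    funext i σ
    unfold IsCalibrated
    simp only [hent]
  have hsig : sigmaStar XC ρ = sigmaStar X ρ := by
    funext i
    unfold sigmaStar
    rw [hcal]
  have hin : inAffinity XC ρ = inAffinity X ρ := by
    funext i j
    unfold inAffinity
    rw [hsig]
    simp only [hcond]
  have hloss : tsneLoss (d := d) XC ρ = tsneLoss X ρ := by
    funext Y
    unfold tsneLoss
    rw [hin]
  unfold TSNE
  rw [hloss]

end TSNEPaper
end
end

section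
/- Fix any n > 2. For every n-point dataset X ⊂ ℝ^{n−1}, every perplexity ρ ∈ (1, n−1), and every scaling constant C > 0, TSNE_ρ(X) = TSNE_ρ(C·X), where C·X = {C·x_1,…,C·x_n}: the set of stationary t-SNE outputs is invariant under multiplicative scaling of the input. -/
open scoped BigOperators RealInnerProductSpace
noncomputable section

namespace TSNEPaper

variable {n k : ℕ} {E F : Type*}

section AuxScalingInvariance
open Real Filter Set Topology






variable {n : ℕ}

def Zf (S : Finset (Fin n)) (c : Fin n → ℝ) (β : ℝ) : ℝ := ∑ j ∈ S, Real.exp (-(c j) * β)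

def Wf (S : Finset (Fin n)) (c : Fin n → ℝ) (β : ℝ) : ℝ := ∑ j ∈ S, c j * Real.exp (-(c j) * β)

def Vf (S : Finset (Fin n)) (c : Fin n → ℝ) (β : ℝ) : ℝ := ∑ j ∈ S, (c j)^2 * Real.exp (-(c j) * β)

def Gf (S : Finset (Fin n)) (c : Fin n → ℝ) (β : ℝ) : ℝ :=
  β * Wf S c β / Zf S c β + Real.log (Zf S c β)

lemma Zf_pos {S : Finset (Fin n)} (hS : S.Nonempty) (c : Fin n → ℝ) (β : ℝ) :
    0 < Zf S c β :=
  Finset.sum_pos (fun j _ => Real.exp_pos _) hS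

lemma hasDerivAt_exp_lin (a β : ℝ) :
    HasDerivAt (fun β : ℝ => Real.exp (a * β)) (a * Real.exp (a * β)) β := by
  have h1 : HasDerivAt (fun β : ℝ => a * β) a β := by
    simpa using (hasDerivAt_id β).const_mul a
  simpa [mul_comm] using h1.exp

lemma hasDerivAt_Zf (S : Finset (Fin n)) (c : Fin n → ℝ) (β : ℝ) :
    HasDerivAt (Zf S c) (-Wf S c β) β := by
  have h : HasDerivAt (fun β => ∑ j ∈ S, Real.exp (-(c j) * β))
      (∑ j ∈ S, (-(c j) * Real.exp (-(c j) * β))) β :=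
    HasDerivAt.fun_sum fun j _ => hasDerivAt_exp_lin (-(c j)) β
  have e : (∑ j ∈ S, (-(c j) * Real.exp (-(c j) * β))) = -Wf S c β := by
    rw [Wf, ← Finset.sum_neg_distrib]
    exact Finset.sum_congr rfl fun j _ => by ring
  exact e ▸ h

lemma hasDerivAt_Wf (S : Finset (Fin n)) (c : Fin n → ℝ) (β : ℝ) :
    HasDerivAt (Wf S c) (-Vf S c β) β := by
  have h : HasDerivAt (fun β => ∑ j ∈ S, c j * Real.exp (-(c j) * β))
      (∑ j ∈ S, c j * (-(c j) * Real.exp (-(c j) * β))) β :=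
    HasDerivAt.fun_sum fun j _ => (hasDerivAt_exp_lin (-(c j)) β).const_mul (c j)
  have e : (∑ j ∈ S, c j * (-(c j) * Real.exp (-(c j) * β))) = -Vf S c β := by
    rw [Vf, ← Finset.sum_neg_distrib]
    exact Finset.sum_congr rfl fun j _ => by ring
  exact e ▸ h

lemma hasDerivAt_Gf {S : Finset (Fin n)} (hS : S.Nonempty) (c : Fin n → ℝ) (β : ℝ) :
    HasDerivAt (Gf S c) (β * ((Wf S c β)^2 - Vf S c β * Zf S c β) / (Zf S c β)^2) β := by
  have hZ := Zf_pos hS c β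
  have h1 : HasDerivAt (fun β => β * Wf S c β) (1 * Wf S c β + β * -Vf S c β) β :=
    (hasDerivAt_id' β).mul (hasDerivAt_Wf S c β)
  have h2 := h1.div (hasDerivAt_Zf S c β) hZ.ne'
  have h3 : HasDerivAt (fun β => Real.log (Zf S c β)) (-Wf S c β / Zf S c β) β :=
    (hasDerivAt_Zf S c β).log hZ.ne'
  have h := h2.add h3
  refine HasDerivAt.congr_deriv h ?_
  field_simp
  ring

lemma variance_identity {S : Finset (Fin n)} (hS : S.Nonempty) (c : Fin n → ℝ) (β : ℝ) :
    Vf S c β * Zf S c β - (Wf S c β)^2 =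
      Zf S c β * ∑ j ∈ S, (c j - Wf S c β / Zf S c β)^2 * Real.exp (-(c j) * β) := by
  have hZ := (Zf_pos hS c β).ne'
  set μ := Wf S c β / Zf S c β with hμ
  have expand : ∑ j ∈ S, (c j - μ)^2 * Real.exp (-(c j) * β) =
      Vf S c β - 2 * μ * Wf S c β + μ^2 * Zf S c β := by
    have step : ∀ j ∈ S, (c j - μ)^2 * Real.exp (-(c j) * β) =
        (c j)^2 * Real.exp (-(c j) * β) - 2 * μ * (c j * Real.exp (-(c j) * β))
          + μ^2 * Real.exp (-(c j) * β) := fun j _ => by ring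
    rw [Finset.sum_congr rfl step, Finset.sum_add_distrib, Finset.sum_sub_distrib,
      ← Finset.mul_sum, ← Finset.mul_sum]
    rfl
  rw [expand, hμ]
  field_simp
  ring

lemma cauchy_lt {S : Finset (Fin n)} (hS : S.Nonempty) {c : Fin n → ℝ}
    (hnc : ∃ a ∈ S, ∃ b ∈ S, c a ≠ c b) (β : ℝ) :
    (Wf S c β)^2 < Vf S c β * Zf S c β := by
  have hZ := Zf_pos hS c β
  rw [← sub_pos, variance_identity hS c β]
  apply mul_pos hZ
  obtain ⟨a, ha, b, hb, hab⟩ := hnc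
  set μ := Wf S c β / Zf S c β with hμ
  have hone : ∃ j ∈ S, c j ≠ μ := by
    by_contra h
    push_neg at h
    exact hab ((h a ha).trans (h b hb).symm)
  obtain ⟨j, hj, hjμ⟩ := hone
  refine Finset.sum_pos' (fun l _ => by positivity) ⟨j, hj, ?_⟩
  have h0 : c j - μ ≠ 0 := sub_ne_zero.2 hjμ
  positivity

lemma strictAntiOn_Gf {S : Finset (Fin n)} (hS : S.Nonempty) {c : Fin n → ℝ}
    (hnc : ∃ a ∈ S, ∃ b ∈ S, c a ≠ c b) :
    StrictAntiOn (Gf S c) (Set.Ioi (0:ℝ)) := by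
  refine strictAntiOn_of_deriv_neg (convex_Ioi 0) ?_ ?_
  · exact fun x _ => (hasDerivAt_Gf hS c x).continuousAt.continuousWithinAt
  · intro x hx
    rw [interior_Ioi] at hx
    rw [(hasDerivAt_Gf hS c x).deriv]
    have h1 := cauchy_lt hS hnc x
    have hZ := Zf_pos hS c x
    have h2 : (Wf S c x)^2 - Vf S c x * Zf S c x < 0 := by linarith
    have hx0 : (0:ℝ) < x := hx
    have h3 : x * ((Wf S c x)^2 - Vf S c x * Zf S c x) < 0 := mul_neg_of_pos_of_neg hx0 h2
    exact div_neg_of_neg_of_pos h3 (by positivity)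

lemma continuous_Gf {S : Finset (Fin n)} (hS : S.Nonempty) (c : Fin n → ℝ) :
    Continuous (Gf S c) :=
  continuous_iff_continuousAt.2 fun x => (hasDerivAt_Gf hS c x).continuousAt



lemma sum_negMulLog_gibbs {S : Finset (Fin n)} (hS : S.Nonempty) (c : Fin n → ℝ) (β : ℝ) :
    ∑ j ∈ S, Real.negMulLog (Real.exp (-(c j) * β) / Zf S c β) = Gf S c β := by
  have hZ := (Zf_pos hS c β).ne'
  have per : ∀ j ∈ S, Real.negMulLog (Real.exp (-(c j) * β) / Zf S c β) =
      (c j * Real.exp (-(c j) * β)) * (β / Zf S c β)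
        + Real.exp (-(c j) * β) * (Real.log (Zf S c β) / Zf S c β) := by
    intro j _
    simp only [Real.negMulLog_def]
    rw [Real.log_div (Real.exp_ne_zero _) hZ, Real.log_exp]
    field_simp
    ring
  rw [Finset.sum_congr rfl per, Finset.sum_add_distrib, ← Finset.sum_mul, ← Finset.sum_mul]
  rw [Gf]
  field_simp
  simp only [Wf, Zf, neg_mul]
  ring

lemma tendsto_exp_neg_mul {a : ℝ} (ha : 0 < a) :
    Tendsto (fun β : ℝ => Real.exp (-a * β)) atTop (𝓝 0) := by
  have h1 : Tendsto (fun β : ℝ => a * β) atTop atTop :=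
    Tendsto.const_mul_atTop ha tendsto_id
  have h2 : Tendsto (fun β : ℝ => -(a * β)) atTop atBot := tendsto_neg_atBot_iff.mpr h1
  have := Real.tendsto_exp_atBot.comp h2
  simpa [Function.comp_def, neg_mul] using this

lemma tendsto_beta_zero : Tendsto (fun σ : ℝ => (2 * σ^2)⁻¹) (𝓝[>] (0:ℝ)) atTop := by
  apply Filter.Tendsto.inv_tendsto_nhdsGT_zero
  apply tendsto_nhdsWithin_of_tendsto_nhds_of_eventually_within
  · have : Tendsto (fun σ : ℝ => 2 * σ^2) (𝓝 0) (𝓝 (2 * 0^2)) := by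
      exact (continuous_const.mul (continuous_pow 2)).tendsto 0
    simpa using this.mono_left nhdsWithin_le_nhds
  · filter_upwards [self_mem_nhdsWithin] with σ (hσ : 0 < σ)
    have : (0:ℝ) < σ^2 := by positivity
    simpa using by positivity
  
lemma tendsto_beta_atTop : Tendsto (fun σ : ℝ => (2 * σ^2)⁻¹) atTop (𝓝 0) := by
  apply Filter.Tendsto.inv_tendsto_atTop
  exact Tendsto.const_mul_atTop two_pos (tendsto_pow_atTop two_ne_zero)




variable {n : ℕ}

lemma entropy2_eq (p : Fin n → ℝ) :
    entropy2 p = (∑ j, Real.negMulLog (p j)) / Real.log 2 := by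
  have h2 : Real.log 2 ≠ 0 := (Real.log_pos one_lt_two).ne'
  have per : ∀ j, Real.negMulLog (p j) = -(p j * Real.logb 2 (p j)) * Real.log 2 := by
    intro j
    rw [Real.negMulLog_def, Real.logb]
    field_simp
  simp only [per]
  rw [← Finset.sum_mul, mul_div_cancel_right₀ _ h2, entropy2, ← Finset.sum_neg_distrib]

lemma continuous_entropy2 : Continuous (entropy2 : (Fin n → ℝ) → ℝ) := by
  have : (entropy2 : (Fin n → ℝ) → ℝ)
      = fun p => (∑ j, Real.negMulLog (p j)) / Real.log 2 := funext entropy2_eq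
  rw [this]
  exact (continuous_finset_sum _ fun j _ =>
    Real.continuous_negMulLog.comp (continuous_apply j)).div_const _

/-- Squared distances from point `i`. -/
def cD [NormedAddCommGroup E] (X : Fin n → E) (i : Fin n) : Fin n → ℝ :=
  fun j => ‖X i - X j‖^2

lemma erase_nonempty (i : Fin n) (hn : 1 < n) : (Finset.univ.erase i).Nonempty := by
  rw [← Finset.card_pos, Finset.card_erase_of_mem (Finset.mem_univ i), Finset.card_univ,
    Fintype.card_fin]
  omega

lemma nearestSet_eq [NormedAddCommGroup E] (X : Fin n → E) (i : Fin n) (hn : 1 < n) :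
    nearestSet X i = (Finset.univ.erase i).filter
      (fun j => cD X i j = (Finset.univ.erase i).inf' (erase_nonempty i hn) (cD X i)) := by
  ext j
  simp only [nearestSet, Finset.mem_filter, and_congr_right_iff]
  intro hj
  constructor
  · intro h
    refine le_antisymm ?_ (Finset.inf'_le _ hj)
    refine Finset.le_inf' _ _ fun l hl => ?_
    exact (pow_le_pow_iff_left₀ (norm_nonneg _) (norm_nonneg _) two_ne_zero).2 (h l hl)
  · intro h l hl
    have h1 : cD X i j ≤ cD X i l := h ▸ Finset.inf'_le _ hl
    exact (pow_le_pow_iff_left₀ (norm_nonneg _) (norm_nonneg _) two_ne_zero).1 h1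

lemma condAffinity_eq_gibbs [NormedAddCommGroup E] (X : Fin n → E) (i : Fin n)
    (σ : ℝ) (hσ : σ ≠ 0) (j : Fin n) (hj : j ≠ i) :
    condAffinity X σ i j =
      Real.exp (-(cD X i j) * (2*σ^2)⁻¹) /
        Zf (Finset.univ.erase i) (cD X i) ((2*σ^2)⁻¹) := by
  rw [condAffinity, if_neg hj, if_neg hσ, Zf]
  simp only [cD, div_eq_mul_inv]

lemma entropy_eq_Gf [NormedAddCommGroup E] (X : Fin n → E) (i : Fin n) (hn : 1 < n)
    (σ : ℝ) (hσ : σ ≠ 0) :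
    entropy2 (condAffinity X σ i) =
      Gf (Finset.univ.erase i) (cD X i) ((2*σ^2)⁻¹) / Real.log 2 := by
  have hS := erase_nonempty i hn
  rw [entropy2_eq]
  congr 1
  have hsplit : ∑ j, Real.negMulLog (condAffinity X σ i j)
      = ∑ j ∈ Finset.univ.erase i, Real.negMulLog (condAffinity X σ i j)
        + Real.negMulLog (condAffinity X σ i i) :=
    (Finset.sum_erase_add _ _ (Finset.mem_univ i)).symm
  rw [hsplit, condAffinity, if_pos rfl, Real.negMulLog_zero, add_zero,
      ← sum_negMulLog_gibbs hS (cD X i) ((2*σ^2)⁻¹)]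
  exact Finset.sum_congr rfl fun j hj => by
    rw [condAffinity_eq_gibbs X i σ hσ j (Finset.ne_of_mem_erase hj)]

lemma card_erase_real (i : Fin n) (hn : 1 < n) :
    (((Finset.univ.erase i).card : ℝ)) = (n:ℝ) - 1 := by
  rw [Finset.card_erase_of_mem (Finset.mem_univ i), Finset.card_univ, Fintype.card_fin,
    Nat.cast_sub (by omega : 1 ≤ n), Nat.cast_one]

lemma tendsto_entropy_atTop [NormedAddCommGroup E] (X : Fin n → E) (i : Fin n) (hn : 1 < n) :
    Tendsto (fun σ => entropy2 (condAffinity X σ i)) atTop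
      (𝓝 (Real.logb 2 ((n:ℝ) - 1))) := by
  have hS := erase_nonempty i hn
  have hG0 : Gf (Finset.univ.erase i) (cD X i) 0 = Real.log ((n:ℝ)-1) := by
    rw [Gf, ← card_erase_real i hn]
    simp [Zf, Wf]
  have hGtend : Tendsto (fun σ : ℝ => Gf (Finset.univ.erase i) (cD X i) ((2*σ^2)⁻¹)) atTop
      (𝓝 (Gf (Finset.univ.erase i) (cD X i) 0)) :=
    ((continuous_Gf hS (cD X i)).tendsto 0).comp tendsto_beta_atTop
  have heq : ∀ᶠ σ : ℝ in atTop, Gf (Finset.univ.erase i) (cD X i) ((2*σ^2)⁻¹) / Real.log 2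
      = entropy2 (condAffinity X σ i) := by
    filter_upwards [eventually_ge_atTop (1:ℝ)] with σ hσ
    exact (entropy_eq_Gf X i hn σ (by linarith)).symm
  have h := (hGtend.div_const (Real.log 2))
  rw [hG0] at h
  exact h.congr' heq

lemma tendsto_condAffinity_zero [NormedAddCommGroup E] (X : Fin n → E) (i : Fin n)
    (hn : 1 < n) (j : Fin n) :
    Tendsto (fun σ => condAffinity X σ i j) (𝓝[>] (0:ℝ))
      (𝓝 (condAffinity X 0 i j)) := by
  by_cases hj : j = i
  · subst hj
    simpa [condAffinity] using (tendsto_const_nhds :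
      Tendsto (fun _ : ℝ => (0:ℝ)) (𝓝[>] (0:ℝ)) (𝓝 0))
  · have hS : (Finset.univ.erase i).Nonempty := erase_nonempty i hn
    set S := Finset.univ.erase i with hSdef
    set c := cD X i with hcdef
    set m0 := S.inf' hS c with hm0
    set T := S.filter (fun l => c l = m0) with hT
    have hjS : j ∈ S := Finset.mem_erase.2 ⟨hj, Finset.mem_univ j⟩
    have hTne : T.Nonempty := by
      obtain ⟨b, hb, hbe⟩ := Finset.exists_mem_eq_inf' hS c
      exact ⟨b, Finset.mem_filter.2 ⟨hb, hbe.symm⟩⟩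
    have hTcard : (0:ℝ) < T.card := by exact_mod_cast Finset.card_pos.2 hTne
    have hone : ∀ a : Fin n, a ∈ S → c a = m0 →
        Tendsto (fun β : ℝ => Real.exp (-(c a - m0)*β)) atTop (𝓝 1) := by
      intro a _ h
      rw [h]
      simpa using (tendsto_const_nhds : Tendsto (fun _ : ℝ => (1:ℝ)) atTop (𝓝 1))
    have hlim : ∀ a : Fin n, a ∈ S →
        Tendsto (fun β : ℝ => Real.exp (-(c a - m0)*β)) atTop
          (𝓝 (if c a = m0 then (1:ℝ) else 0)) := by
      intro a ha
      by_cases h : c a = m0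
      · rw [if_pos h]; exact hone a ha h
      · rw [if_neg h]
        exact tendsto_exp_neg_mul
          (sub_pos.2 (lt_of_le_of_ne (Finset.inf'_le _ ha) (Ne.symm h)))
    have hden : Tendsto (fun β : ℝ => ∑ l ∈ S, Real.exp (-(c l - m0)*β)) atTop
        (𝓝 (T.card : ℝ)) := by
      have hsum := tendsto_finset_sum S fun l hl => hlim l hl
      have : (∑ l ∈ S, if c l = m0 then (1:ℝ) else 0) = T.card := by
        rw [hT, Finset.sum_boole]
      rwa [this] at hsum
    have hF : Tendsto
        (fun β : ℝ => Real.exp (-(c j - m0)*β) / ∑ l ∈ S, Real.exp (-(c l - m0)*β)) atTop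
        (𝓝 ((if c j = m0 then (1:ℝ) else 0) / (T.card : ℝ))) :=
      (hlim j hjS).div hden hTcard.ne'
    have hcomp := hF.comp tendsto_beta_zero
    have hEq : ∀ᶠ σ in 𝓝[>] (0:ℝ), ((fun β : ℝ =>
          Real.exp (-(c j - m0)*β) / ∑ l ∈ S, Real.exp (-(c l - m0)*β)) ∘
          (fun σ : ℝ => (2*σ^2)⁻¹)) σ = condAffinity X σ i j := by
      filter_upwards [self_mem_nhdsWithin] with σ (hσ : 0 < σ)
      have hβ : ∀ a : ℝ, Real.exp (-(a - m0) * (2*σ^2)⁻¹)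
          = Real.exp (-a * (2*σ^2)⁻¹) * Real.exp (m0 * (2*σ^2)⁻¹) := by
        intro a
        rw [← Real.exp_add]
        congr 1
        ring
      have hsum : (∑ l ∈ S, Real.exp (-(c l - m0) * (2*σ^2)⁻¹))
          = (∑ l ∈ S, Real.exp (-(c l) * (2*σ^2)⁻¹)) * Real.exp (m0 * (2*σ^2)⁻¹) := by
        rw [Finset.sum_mul]
        exact Finset.sum_congr rfl fun l _ => hβ (c l)
      simp only [Function.comp_apply]
      rw [condAffinity_eq_gibbs X i σ hσ.ne' j hj, hsum, hβ (c j), Zf,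
        mul_div_mul_right _ _ (Real.exp_ne_zero _)]
    have hval : (if c j = m0 then (1:ℝ) else 0) / (T.card : ℝ)
        = condAffinity X 0 i j := by
      have hns : nearestSet X i = T := nearestSet_eq X i hn
      rw [condAffinity, if_neg hj, if_pos rfl, hns]
      by_cases h : c j = m0
      · rw [if_pos h, if_pos (Finset.mem_filter.2 ⟨hjS, h⟩), one_div]
      · have hnotmem : j ∉ T := fun hmem => h (Finset.mem_filter.1 hmem).2
        rw [if_neg h, if_neg hnotmem, zero_div]
    rw [← hval]
    exact hcomp.congr' hEq

lemma tendsto_entropy_zero [NormedAddCommGroup E] (X : Fin n → E) (i : Fin n) (hn : 1 < n) :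
    Tendsto (fun σ => entropy2 (condAffinity X σ i)) (𝓝[>] (0:ℝ))
      (𝓝 (entropy2 (condAffinity X 0 i))) := by
  have hq : Tendsto (fun σ => condAffinity X σ i) (𝓝[>] (0:ℝ))
      (𝓝 (condAffinity X 0 i)) :=
    tendsto_pi_nhds.2 fun j => tendsto_condAffinity_zero X i hn j
  exact (continuous_entropy2.tendsto _).comp hq

lemma strictMonoOn_entropy [NormedAddCommGroup E] (X : Fin n → E) (i : Fin n) (hn : 1 < n)
    (hnc : ∃ a ∈ Finset.univ.erase i, ∃ b ∈ Finset.univ.erase i, cD X i a ≠ cD X i b) :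
    StrictMonoOn (fun σ => entropy2 (condAffinity X σ i)) (Set.Ioi (0:ℝ)) := by
  intro σ₁ h1 σ₂ h2 hlt
  have h1' : (0:ℝ) < σ₁ := h1
  have h2' : (0:ℝ) < σ₂ := h2
  have hS := erase_nonempty i hn
  simp only
  rw [entropy_eq_Gf X i hn σ₁ h1'.ne', entropy_eq_Gf X i hn σ₂ h2'.ne']
  have hβlt : (2*σ₂^2)⁻¹ < (2*σ₁^2)⁻¹ := by
    apply inv_strictAnti₀ (by positivity)
    have : σ₁^2 < σ₂^2 := by nlinarith
    linarith
  have hβ2 : (0:ℝ) < (2*σ₂^2)⁻¹ := by positivity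
  have hβ1 : (0:ℝ) < (2*σ₁^2)⁻¹ := by positivity
  have hG := strictAntiOn_Gf hS hnc hβ2 hβ1 hβlt
  have hlog : (0:ℝ) < Real.log 2 := Real.log_pos one_lt_two
  exact (div_lt_div_iff_of_pos_right hlog).2 hG

lemma entropy_zero_le [NormedAddCommGroup E] (X : Fin n → E) (i : Fin n) (hn : 1 < n)
    (hnc : ∃ a ∈ Finset.univ.erase i, ∃ b ∈ Finset.univ.erase i, cD X i a ≠ cD X i b)
    {τ : ℝ} (hτ : 0 < τ) :
    entropy2 (condAffinity X 0 i) ≤ entropy2 (condAffinity X τ i) := by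
  have hmono := strictMonoOn_entropy X i hn hnc
  refine le_of_tendsto (tendsto_entropy_zero X i hn) ?_
  filter_upwards [Ioo_mem_nhdsGT_of_mem (left_mem_Ico.2 hτ)] with σ' hσ'
  exact (hmono hσ'.1 hτ hσ'.2).le

lemma entropy_zero_lt [NormedAddCommGroup E] (X : Fin n → E) (i : Fin n) (hn : 1 < n)
    (hnc : ∃ a ∈ Finset.univ.erase i, ∃ b ∈ Finset.univ.erase i, cD X i a ≠ cD X i b)
    {σ : ℝ} (hσ : 0 < σ) :
    entropy2 (condAffinity X 0 i) < entropy2 (condAffinity X σ i) := by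
  have hmono := strictMonoOn_entropy X i hn hnc
  calc entropy2 (condAffinity X 0 i) ≤ entropy2 (condAffinity X (σ/2) i) :=
        entropy_zero_le X i hn hnc (half_pos hσ)
    _ < entropy2 (condAffinity X σ i) := hmono (half_pos hσ) hσ (by linarith)

lemma calibrated_nonconst [NormedAddCommGroup E] (X : Fin n → E) (i : Fin n) (hn : 1 < n)
    (hnc : ∃ a ∈ Finset.univ.erase i, ∃ b ∈ Finset.univ.erase i, cD X i a ≠ cD X i b)
    {ρ : ℝ} (hρ0 : 0 < ρ) (hρ' : ρ < (n:ℝ) - 1) :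
    ∃ σ, IsCalibrated X ρ i σ ∧ ∀ τ, IsCalibrated X ρ i τ → τ = σ := by
  classical
  set f : ℝ → ℝ := fun σ => entropy2 (condAffinity X σ i) with hf
  set t : ℝ := Real.logb 2 ρ with ht
  have hS := erase_nonempty i hn
  have hmono := strictMonoOn_entropy X i hn hnc
  have htL : t < Real.logb 2 ((n:ℝ)-1) := by
    apply Real.logb_lt_logb one_lt_two hρ0 hρ'
  by_cases hcase : t ≤ f 0
  · refine ⟨0, ⟨le_refl 0, fun σ' hσ' => ?_⟩, fun τ hτ => ?_⟩
    · rcases eq_or_lt_of_le hσ' with h | h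
      · rw [← h]
      · have h1 : f 0 ≤ f σ' := entropy_zero_le X i hn hnc h
        rw [abs_of_nonneg (by linarith), abs_of_nonneg (by linarith)]
        linarith
    · by_contra hne
      have hτpos : 0 < τ := lt_of_le_of_ne hτ.1 (Ne.symm hne)
      have h1 : f 0 < f τ := entropy_zero_lt X i hn hnc hτpos
      have h2 := hτ.2 0 (le_refl 0)
      rw [abs_of_nonneg (by linarith), abs_of_nonneg (by linarith)] at h2
      linarith
  · push_neg at hcase
    obtain ⟨σ₁, hσ₁t, hσ₁pos⟩ : ∃ σ₁, f σ₁ < t ∧ 0 < σ₁ := by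
      have h1 : ∀ᶠ σ in 𝓝[>] (0:ℝ), f σ < t :=
        (tendsto_entropy_zero X i hn).eventually_lt_const hcase
      obtain ⟨σ₁, h, h'⟩ := (h1.and self_mem_nhdsWithin).exists
      exact ⟨σ₁, h, h'⟩
    obtain ⟨σ₂, hσ₂t, hσ₂gt⟩ : ∃ σ₂, t < f σ₂ ∧ σ₁ < σ₂ := by
      have h1 : ∀ᶠ σ in atTop, t < f σ :=
        (tendsto_entropy_atTop X i hn).eventually_const_lt htL
      obtain ⟨σ₂, h, h'⟩ := (h1.and (eventually_gt_atTop σ₁)).exists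
      exact ⟨σ₂, h, h'⟩
    have hcont : ContinuousOn f (Set.Icc σ₁ σ₂) := by
      have hg : ContinuousOn
          (fun σ : ℝ => Gf (Finset.univ.erase i) (cD X i) ((2*σ^2)⁻¹) / Real.log 2)
          (Set.Icc σ₁ σ₂) := by
        refine ContinuousOn.div_const ?_ _
        refine (continuous_Gf hS (cD X i)).comp_continuousOn ?_
        refine ContinuousOn.inv₀ ((continuous_const.mul (continuous_pow 2)).continuousOn) ?_
        intro x hx
        have : 0 < x := lt_of_lt_of_le hσ₁pos hx.1
        positivity
      refine hg.congr fun x hx => ?_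
      have hx0 : 0 < x := lt_of_lt_of_le hσ₁pos hx.1
      exact entropy_eq_Gf X i hn x hx0.ne'
    obtain ⟨σ₀, hσ₀mem, hfσ₀⟩ :=
      intermediate_value_Icc hσ₂gt.le hcont ⟨hσ₁t.le, hσ₂t.le⟩
    have hσ₀pos : 0 < σ₀ := lt_of_lt_of_le hσ₁pos hσ₀mem.1
    refine ⟨σ₀, ⟨hσ₀pos.le, fun σ' _ => ?_⟩, fun τ hτ => ?_⟩
    · show |f σ₀ - t| ≤ |f σ' - t|
      rw [hfσ₀]
      simpa using abs_nonneg _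
    · have h2 : |f τ - t| ≤ |f σ₀ - t| := hτ.2 σ₀ hσ₀pos.le
      rw [hfσ₀] at h2
      simp only [sub_self, abs_zero] at h2
      have hfτ : f τ = t := by
        have := abs_nonneg (f τ - t)
        have h3 : |f τ - t| = 0 := le_antisymm h2 this
        have := abs_eq_zero.1 h3
        linarith
      have hτpos : 0 < τ := by
        rcases eq_or_lt_of_le hτ.1 with h | h
        · exfalso
          rw [← h] at hfτ
          exact absurd hfτ (by simpa [hf] using hcase.ne)
        · exact h
      exact hmono.injOn hτpos hσ₀pos (hfτ.trans hfσ₀.symm)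

lemma condAffinity_const_dist [NormedAddCommGroup E] (X : Fin n → E) (i : Fin n)
    (hn : 1 < n)
    (hc : ∀ j ∈ Finset.univ.erase i, ∀ l ∈ Finset.univ.erase i, ‖X i - X j‖ = ‖X i - X l‖)
    (σ : ℝ) :
    condAffinity X σ i = condAffinity X 0 i := by
  classical
  funext j
  by_cases hj : j = i
  · simp [condAffinity, hj]
  by_cases hσ : σ = 0
  · rw [hσ]
  have hjS : j ∈ Finset.univ.erase i := Finset.mem_erase.2 ⟨hj, Finset.mem_univ j⟩
  have hns : nearestSet X i = Finset.univ.erase i := by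
    rw [nearestSet]
    refine Finset.filter_true_of_mem fun a ha l hl => (hc a ha l hl).le
  rw [condAffinity, condAffinity, if_neg hj, if_neg hj, if_neg hσ, if_pos rfl, hns,
    if_pos hjS]
  have hsum : ∑ l ∈ Finset.univ.erase i, Real.exp (-‖X i - X l‖^2/(2*σ^2))
      = ((Finset.univ.erase i).card : ℝ) * Real.exp (-‖X i - X j‖^2/(2*σ^2)) := by
    rw [Finset.sum_congr rfl fun l hl => by rw [hc l hl j hjS]]
    rw [Finset.sum_const, nsmul_eq_mul]
  rw [hsum, div_mul_eq_div_div_swap, div_self (Real.exp_ne_zero _), one_div]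

section Scaling

variable [NormedAddCommGroup E] [NormedSpace ℝ E]

lemma norm_smul_sub (X : Fin n → E) {C : ℝ} (hC : 0 < C) (a b : Fin n) :
    ‖C • X a - C • X b‖ = C * ‖X a - X b‖ := by
  rw [← smul_sub, norm_smul, Real.norm_eq_abs, abs_of_pos hC]

lemma nearestSet_smul (X : Fin n → E) (i : Fin n) {C : ℝ} (hC : 0 < C) :
    nearestSet (fun l => C • X l) i = nearestSet X i := by
  ext j
  simp only [nearestSet, Finset.mem_filter, norm_smul_sub X hC, and_congr_right_iff]
  intro hj
  constructor
  · intro h l hl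
    exact (mul_le_mul_iff_right₀ hC).1 (h l hl)
  · intro h l hl
    exact (mul_le_mul_iff_right₀ hC).2 (h l hl)

lemma condAffinity_smul (X : Fin n → E) (i : Fin n) {C : ℝ} (hC : 0 < C) (σ : ℝ) :
    condAffinity (fun l => C • X l) σ i = condAffinity X (σ/C) i := by
  funext j
  by_cases hj : j = i
  · simp [condAffinity, hj]
  by_cases hσ : σ = 0
  · rw [hσ, zero_div, condAffinity, condAffinity, if_neg hj, if_neg hj, if_pos rfl,
      if_pos rfl, nearestSet_smul X i hC]
  · have hσC : σ / C ≠ 0 := div_ne_zero hσ hC.ne'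
    rw [condAffinity, condAffinity, if_neg hj, if_neg hj, if_neg hσ, if_neg hσC]
    have harg : ∀ a b : Fin n,
        -‖C • X a - C • X b‖^2/(2*σ^2) = -‖X a - X b‖^2/(2*(σ/C)^2) := by
      intro a b
      rw [norm_smul_sub X hC]
      rw [div_eq_div_iff (by positivity) (by positivity)]
      field_simp
    rw [harg i j]
    congr 1
    exact Finset.sum_congr rfl fun l _ => by rw [harg i l]

lemma entropy_smul (X : Fin n → E) (i : Fin n) {C : ℝ} (hC : 0 < C) (σ : ℝ) :
    entropy2 (condAffinity (fun l => C • X l) σ i) = entropy2 (condAffinity X (σ/C) i) := by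
  rw [condAffinity_smul X i hC σ]

lemma isCalibrated_smul (X : Fin n → E) (i : Fin n) {C : ℝ} (hC : 0 < C) (ρ σ : ℝ) :
    IsCalibrated (fun l => C • X l) ρ i σ ↔ IsCalibrated X ρ i (σ/C) := by
  constructor
  · rintro ⟨h0, h⟩
    refine ⟨div_nonneg h0 hC.le, fun τ hτ => ?_⟩
    have h1 := h (C*τ) (by positivity)
    rwa [entropy_smul X i hC, entropy_smul X i hC, mul_div_cancel_left₀ τ hC.ne'] at h1
  · rintro ⟨h0, h⟩
    refine ⟨?_, fun τ hτ => ?_⟩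
    · have h1 : 0 ≤ (σ/C) * C := mul_nonneg h0 hC.le
      rwa [div_mul_cancel₀ σ hC.ne'] at h1
    · have h1 := h (τ/C) (div_nonneg hτ hC.le)
      rwa [entropy_smul X i hC, entropy_smul X i hC]

lemma condAffinity_sigmaStar_smul (X : Fin n → E) (i : Fin n) (hn : 1 < n)
    {ρ C : ℝ} (hρ0 : 0 < ρ) (hρ' : ρ < (n:ℝ) - 1) (hC : 0 < C) :
    condAffinity (fun l => C • X l) (sigmaStar (fun l => C • X l) ρ i) i
      = condAffinity X (sigmaStar X ρ i) i := by
  classical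
  set X' := fun l => C • X l with hX'
  by_cases hconst : ∀ j ∈ Finset.univ.erase i, ∀ l ∈ Finset.univ.erase i,
      ‖X i - X j‖ = ‖X i - X l‖
  · -- constant-distance case: the affinity does not depend on σ at all
    have hconst' : ∀ j ∈ Finset.univ.erase i, ∀ l ∈ Finset.univ.erase i,
        ‖X' i - X' j‖ = ‖X' i - X' l‖ := by
      intro j hj l hl
      rw [hX']
      simp only [norm_smul_sub X hC]
      rw [hconst j hj l hl]
    have hcal : IsCalibrated X ρ i 0 := by
      refine ⟨le_refl 0, fun σ' _ => ?_⟩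
      rw [condAffinity_const_dist X i hn hconst σ']
    have hcal' : IsCalibrated X' ρ i 0 := by
      refine ⟨le_refl 0, fun σ' _ => ?_⟩
      rw [condAffinity_const_dist X' i hn hconst' σ']
    have h1 : IsCalibrated X' ρ i (sigmaStar X' ρ i) :=
      Classical.epsilon_spec (⟨0, hcal'⟩ : ∃ σ, IsCalibrated X' ρ i σ)
    have h2 : IsCalibrated X ρ i (sigmaStar X ρ i) :=
      Classical.epsilon_spec (⟨0, hcal⟩ : ∃ σ, IsCalibrated X ρ i σ)
    calc condAffinity X' (sigmaStar X' ρ i) i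
        = condAffinity X' 0 i := condAffinity_const_dist X' i hn hconst' _
      _ = condAffinity X (0/C) i := condAffinity_smul X i hC 0
      _ = condAffinity X 0 i := by rw [zero_div]
      _ = condAffinity X (sigmaStar X ρ i) i :=
          (condAffinity_const_dist X i hn hconst _).symm
  · -- non-constant case: unique calibrated bandwidth
    push_neg at hconst
    obtain ⟨a, ha, b, hb, hab⟩ := hconst
    have hnc : ∃ a ∈ Finset.univ.erase i, ∃ b ∈ Finset.univ.erase i,
        cD X i a ≠ cD X i b := by
      refine ⟨a, ha, b, hb, fun hcd => hab ?_⟩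
      have h1 := norm_nonneg (X i - X a)
      have h2 := norm_nonneg (X i - X b)
      have h3 : ‖X i - X a‖^2 = ‖X i - X b‖^2 := by simpa [cD] using hcd
      refine le_antisymm ?_ ?_ <;> nlinarith [h3, h1, h2]
    obtain ⟨σu, hcalX, huniq⟩ := calibrated_nonconst X i hn hnc hρ0 hρ'
    have hexX' : ∃ σ, IsCalibrated X' ρ i σ := by
      refine ⟨C*σu, (isCalibrated_smul X i hC ρ _).2 ?_⟩
      rwa [mul_div_cancel_left₀ σu hC.ne']
    have h1 : IsCalibrated X' ρ i (sigmaStar X' ρ i) := Classical.epsilon_spec hexX'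
    have h2 : IsCalibrated X ρ i (sigmaStar X ρ i) :=
      Classical.epsilon_spec (⟨σu, hcalX⟩ : ∃ σ, IsCalibrated X ρ i σ)
    have h3 : IsCalibrated X ρ i (sigmaStar X' ρ i / C) :=
      (isCalibrated_smul X i hC ρ _).1 h1
    have h4 : sigmaStar X' ρ i / C = σu := huniq _ h3
    have h5 : sigmaStar X ρ i = σu := huniq _ h2
    rw [condAffinity_smul X i hC, h4, h5]

lemma inAffinity_smul (X : Fin n → E) (hn : 1 < n)
    {ρ C : ℝ} (hρ0 : 0 < ρ) (hρ' : ρ < (n:ℝ) - 1) (hC : 0 < C) :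
    inAffinity (fun l => C • X l) ρ = inAffinity X ρ := by
  funext i j
  rw [inAffinity, inAffinity]
  by_cases hij : i = j
  · rw [if_pos hij, if_pos hij]
  · rw [if_neg hij, if_neg hij,
      condAffinity_sigmaStar_smul X j hn hρ0 hρ' hC,
      condAffinity_sigmaStar_smul X i hn hρ0 hρ' hC]

end Scaling

end AuxScalingInvariance

/-- Lemma `tSNE_multiplicative_invariance`: the set of stationary t-SNE
outputs is invariant under multiplicative scaling of the input. -/
theorem tSNE_multiplicative_invariance (n d : ℕ) (hn : 2 < n) (hd : 1 ≤ d)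
    (X : Fin n → EuclideanSpace ℝ (Fin (n - 1)))
    (ρ C : ℝ) (hρ : 1 < ρ) (hρ' : ρ < (n : ℝ) - 1) (hC : 0 < C) :
    TSNE d ρ X = TSNE d ρ (fun i => C • X i) := by
  have hn1 : 1 < n := by omega
  have hρ0 : (0:ℝ) < ρ := one_pos.trans hρ
  have hAff : inAffinity (fun i => C • X i) ρ = inAffinity X ρ :=
    inAffinity_smul X hn1 hρ0 hρ' hC
  have hLoss : (tsneLoss (fun i => C • X i) ρ :
      (Fin n → EuclideanSpace ℝ (Fin d)) → ℝ) = tsneLoss X ρ := by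
    funext Y
    rw [tsneLoss, tsneLoss, hAff]
  rw [TSNE, TSNE, hLoss]

end TSNEPaper
end
end

section
/- Fix n ≥ 2 and Y = {y_0, y_1,…,y_{n−1}} ⊂ ℝ^d. Let β := diam(Y∖{y_0}) and γ := min_{1 ≤ j ≤ n−1} ‖y_0 − y_j‖. Then the total output affinity of y_0 satisfies Σ_{i=1}^{n−1} Q_{0i}(Y) ≤ 1 / ( 2 + (n−2)·(1+γ²)/(1+β²) ). -/
open scoped BigOperators RealInnerProductSpace
noncomputable section

namespace TSNEPaper

variable {n k : ℕ} {E F : Type*}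

lemma sum_offDiag_eq {α M : Type*} [DecidableEq α] [AddCommMonoid M]
    (s : Finset α) (f : α → α → M) :
    ∑ p ∈ s.offDiag, f p.1 p.2 = ∑ i ∈ s, ∑ j ∈ s.erase i, f i j := by
  rw [show s.offDiag = (s ×ˢ s).filter (fun a : α × α => a.1 ≠ a.2) by ext x; simp [and_assoc], Finset.sum_filter, Finset.sum_product]
  refine Finset.sum_congr rfl fun i _ => ?_
  rw [← Finset.sum_filter]
  congr 1
  ext j
  simp [Finset.mem_erase, ne_comm, and_comm]

set_option maxHeartbeats 1000000 in
/-- Lemma `Qsum_bound`: bound on the total output affinity of a designated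
point in terms of `β = diam` of the remaining points and `γ = ` the minimum distance from
the designated point to the rest. -/
theorem Qsum_bound (n d : ℕ) (hn : 2 ≤ n)
    (Y : Fin n → EuclideanSpace ℝ (Fin d)) (i0 : Fin n) (β γ : ℝ)
    (hβ : β = Metric.diam (Y '' {i : Fin n | i ≠ i0}))
    (hγ : γ = Metric.infDist (Y i0) (Y '' {i : Fin n | i ≠ i0})) :
    ∑ i ∈ Finset.univ.erase i0, outAffinity Y i0 i ≤
      (2 + ((n : ℝ) - 2) * (1 + γ ^ 2) / (1 + β ^ 2))⁻¹ := by
  classical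
  set f : Fin n → Fin n → ℝ := fun i j => (1 + ‖Y i - Y j‖ ^ 2)⁻¹ with hf
  have hfpos : ∀ i j, 0 < f i j := by
    intro i j; simp only [hf]; positivity
  set S : Finset (Fin n) := Finset.univ.erase i0 with hS
  set Z : ℝ := ∑ p ∈ Finset.univ.offDiag, f p.1 p.2 with hZdef
  set A : ℝ := ∑ i ∈ S, f i0 i with hA
  have hβ0 : 0 ≤ β := hβ ▸ Metric.diam_nonneg
  have hγ0 : 0 ≤ γ := hγ ▸ Metric.infDist_nonneg
  set c0 : ℝ := (1 + β ^ 2)⁻¹ with hc0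
  set g : ℝ := (1 + γ ^ 2)⁻¹ with hg
  have hc0pos : 0 < c0 := by positivity
  have hgpos : 0 < g := by positivity
  have hScard : (S.card : ℝ) = (n : ℝ) - 1 := by
    rw [hS, Finset.card_erase_of_mem (Finset.mem_univ _), Finset.card_univ, Fintype.card_fin]
    have : 1 ≤ n := le_trans (by norm_num) hn
    push_cast [Nat.cast_sub this]
    ring
  have hSne : S.Nonempty := Finset.card_pos.1 (by
    rw [hS, Finset.card_erase_of_mem (Finset.mem_univ _), Finset.card_univ, Fintype.card_fin]
    omega)
  have hApos : 0 < A := Finset.sum_pos (fun i _ => hfpos _ _) hSne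
  -- bound each f i0 i by g
  have hfle : ∀ i ∈ S, f i0 i ≤ g := by
    intro i hi
    have hi' : i ≠ i0 := (Finset.mem_erase.1 hi).1
    have hmem : Y i ∈ Y '' {j : Fin n | j ≠ i0} := ⟨i, hi', rfl⟩
    have hdist : γ ≤ ‖Y i0 - Y i‖ := by
      rw [hγ, ← dist_eq_norm]
      exact Metric.infDist_le_dist_of_mem hmem
    have : 1 + γ ^ 2 ≤ 1 + ‖Y i0 - Y i‖ ^ 2 := by nlinarith [norm_nonneg (Y i0 - Y i)]
    exact inv_anti₀ (by positivity) this
  have hAle : A ≤ ((n : ℝ) - 1) * g := by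
    calc A ≤ ∑ _i ∈ S, g := Finset.sum_le_sum hfle
    _ = ((n : ℝ) - 1) * g := by rw [Finset.sum_const, nsmul_eq_mul, hScard]
  -- bound each within-rest term below by c0
  have hfge : ∀ i ∈ S, ∀ j ∈ S.erase i, c0 ≤ f i j := by
    intro i hi j hj
    have hi' : i ≠ i0 := (Finset.mem_erase.1 hi).1
    have hj' : j ≠ i0 := (Finset.mem_erase.1 (Finset.mem_erase.1 hj).2).1
    have hdist : ‖Y i - Y j‖ ≤ β := by
      rw [hβ, ← dist_eq_norm]
      exact Metric.dist_le_diam_of_mem ((Set.toFinite _).isBounded) ⟨i, hi', rfl⟩ ⟨j, hj', rfl⟩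
    have : 1 + ‖Y i - Y j‖ ^ 2 ≤ 1 + β ^ 2 := by nlinarith [norm_nonneg (Y i - Y j)]
    exact inv_anti₀ (by positivity) this
  set C : ℝ := ((n : ℝ) - 1) * ((n : ℝ) - 2) * c0 with hC
  have hn2 : (2:ℝ) ≤ (n:ℝ) := by exact_mod_cast hn
  have hCnonneg : 0 ≤ C := by
    apply mul_nonneg (mul_nonneg (by linarith) (by linarith)) hc0pos.le
  -- decompose Z
  have hZge : 2 * A + C ≤ Z := by
    rw [hZdef, sum_offDiag_eq]
    rw [← Finset.sum_erase_add _ _ (Finset.mem_univ i0)]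
    have h1 : ∑ j ∈ Finset.univ.erase i0, f i0 j = A := rfl
    rw [h1]
    have h2 : ∀ i ∈ S, f i0 i + ∑ j ∈ S.erase i, f i j ≤ ∑ j ∈ Finset.univ.erase i, f i j := by
      intro i hi
      have hi' : i ≠ i0 := (Finset.mem_erase.1 hi).1
      have hsub : insert i0 (S.erase i) ⊆ Finset.univ.erase i := by
        intro j hj
        rcases Finset.mem_insert.1 hj with rfl | hj
        · exact Finset.mem_erase.2 ⟨hi'.symm, Finset.mem_univ _⟩
        · have h3 := Finset.mem_erase.1 hj
          exact Finset.mem_erase.2 ⟨h3.1, Finset.mem_univ _⟩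
      have hins : f i i0 + ∑ j ∈ S.erase i, f i j = ∑ j ∈ insert i0 (S.erase i), f i j := by
        rw [Finset.sum_insert (by simp [hS])]
      have hsym : f i0 i = f i i0 := by simp [hf, norm_sub_rev]
      rw [hsym, hins]
      exact Finset.sum_le_sum_of_subset_of_nonneg hsub fun j _ _ => (hfpos _ _).le
    have h4 : A + C ≤ ∑ i ∈ S, ∑ j ∈ Finset.univ.erase i, f i j := by
      have h5 : ∀ i ∈ S, f i0 i + ((n:ℝ) - 2) * c0 ≤ ∑ j ∈ Finset.univ.erase i, f i j := by
        intro i hi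
        refine le_trans ?_ (h2 i hi)
        have hcard' : ((S.erase i).card : ℝ) = (n : ℝ) - 2 := by
          rw [Finset.card_erase_of_mem hi]
          have hpos : 1 ≤ S.card := Finset.card_pos.2 hSne
          push_cast [Nat.cast_sub hpos]
          rw [hScard]; ring
        have : ((n:ℝ) - 2) * c0 ≤ ∑ j ∈ S.erase i, f i j := by
          calc ((n:ℝ) - 2) * c0 = ∑ _j ∈ S.erase i, c0 := by
                rw [Finset.sum_const, nsmul_eq_mul, hcard']
          _ ≤ ∑ j ∈ S.erase i, f i j := Finset.sum_le_sum (hfge i hi)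
        linarith
      calc A + C = ∑ i ∈ S, (f i0 i + ((n:ℝ) - 2) * c0) := by
            rw [Finset.sum_add_distrib, Finset.sum_const, nsmul_eq_mul, hScard, hC]; ring
      _ ≤ _ := Finset.sum_le_sum h5
    linarith
  have hZpos : 0 < Z := lt_of_lt_of_le (by linarith) hZge
  -- LHS = A / Z
  have hLHS : ∑ i ∈ Finset.univ.erase i0, outAffinity Y i0 i = A / Z := by
    rw [hA, Finset.sum_div]
    refine Finset.sum_congr rfl fun i hi => ?_
    have hi' : i ≠ i0 := (Finset.mem_erase.1 hi).1
    rw [outAffinity, if_neg hi'.symm]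
  rw [hLHS]
  have step1 : A / Z ≤ A / (2 * A + C) :=
    div_le_div_of_nonneg_left hApos.le (by linarith) hZge
  have step2 : A / (2 * A + C) ≤ ((n:ℝ) - 1) * g / (2 * (((n:ℝ) - 1) * g) + C) := by
    rw [div_le_div_iff₀ (by linarith) (by nlinarith)]
    nlinarith
  have step3 : ((n:ℝ) - 1) * g / (2 * (((n:ℝ) - 1) * g) + C) =
      (2 + ((n : ℝ) - 2) * (1 + γ ^ 2) / (1 + β ^ 2))⁻¹ := by
    rw [hC, hg, hc0]
    have h1 : (1:ℝ) + γ ^ 2 ≠ 0 := by positivity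
    have h2 : (1:ℝ) + β ^ 2 ≠ 0 := by positivity
    have h3 : (n:ℝ) - 1 ≠ 0 := by linarith
    have hd1 : (0:ℝ) < 2 * (((n:ℝ) - 1) * (1 + γ^2)⁻¹) + ((n:ℝ) - 1) * ((n:ℝ) - 2) * (1 + β^2)⁻¹ := by
      have : 0 ≤ ((n:ℝ) - 1) * ((n:ℝ) - 2) * (1 + β^2)⁻¹ := by
        apply mul_nonneg (mul_nonneg (by linarith) (by linarith)); positivity
      nlinarith [mul_pos (show (0:ℝ) < (n:ℝ)-1 by linarith) hgpos]
    have hd2 : (0:ℝ) < 2 + ((n:ℝ) - 2) * (1 + γ ^ 2) / (1 + β ^ 2) := by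
      have : 0 ≤ ((n:ℝ) - 2) * (1 + γ^2) / (1 + β^2) := by
        apply div_nonneg (mul_nonneg (by linarith) (by positivity)); positivity
      linarith
    rw [div_eq_iff hd1.ne', eq_comm, inv_mul_eq_div, div_eq_iff hd2.ne']
    field_simp
  calc A / Z ≤ A / (2 * A + C) := step1
  _ ≤ ((n:ℝ) - 1) * g / (2 * (((n:ℝ) - 1) * g) + C) := step2
  _ = _ := step3

end TSNEPaper
end
end

section
/- Fix n ≥ 2 and Y = {y_0, y_1,…,y_{n−1}} ⊂ ℝ^d. If Y is an (α, y_0)-outlier configuration with α = α(Y, y_0) (the largest such α), then there exists a unit vector v ∈ ℝ^d such that for every i ∈ {1,…,n−1}: ‖y_i − y_0‖ · α/√(1+α²) ≤ (y_i − y_0)·v ≤ ‖y_i − y_0‖. -/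
open scoped BigOperators RealInnerProductSpace
noncomputable section

namespace TSNEPaper

variable {n k : ℕ} {E F : Type*}

set_option maxHeartbeats 1000000

/-- Lemma `r_split`: if `Y` is an `(α, y₀)`-outlier configuration with `α`
maximal, then there is a unit direction `v` along which every displacement `y_i - y₀` has
projection between `‖y_i - y₀‖·α/√(1+α²)` and `‖y_i - y₀‖`. -/
theorem r_split (n d : ℕ) (hn : 2 ≤ n)
    (Y : Fin n → EuclideanSpace ℝ (Fin d)) (i0 : Fin n) (α : ℝ)
    (hconf : IsOutlierConfig Y i0 α)
    (hmax : ∀ α' : ℝ, IsOutlierConfig Y i0 α' → α' ≤ α) :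
    ∃ v : EuclideanSpace ℝ (Fin d), ‖v‖ = 1 ∧ ∀ i : Fin n, i ≠ i0 →
      ‖Y i - Y i0‖ * (α / Real.sqrt (1 + α ^ 2)) ≤ ⟪Y i - Y i0, v⟫ ∧
      ⟪Y i - Y i0, v⟫ ≤ ‖Y i - Y i0‖ := by
  obtain ⟨hα, v, hv, hsep⟩ := hconf
  set M : ℝ := max 1 (Metric.diam (Y '' {i : Fin n | i ≠ i0})) with hMdef
  have hM1 : (1 : ℝ) ≤ M := le_max_left _ _
  have hM0 : (0 : ℝ) < M := lt_of_lt_of_le one_pos hM1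
  -- distances among non-outlier points are bounded by M
  have hdiam : ∀ j, j ≠ i0 → ∀ i, i ≠ i0 → ‖Y j - Y i‖ ≤ M := by
    intro j hj i hi
    have hb : Bornology.IsBounded (Y '' {i : Fin n | i ≠ i0}) :=
      (Set.toFinite _).isBounded
    have h := Metric.dist_le_diam_of_mem hb ⟨j, hj, rfl⟩ ⟨i, hi, rfl⟩
    rw [dist_eq_norm] at h
    exact h.trans (le_max_right _ _)
  -- residual norm lemma
  have resid : ∀ y : EuclideanSpace ℝ (Fin d), ‖y - ⟪y, v⟫ • v‖ ≤ ‖y‖ := by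
    intro y
    have h : ‖y - ⟪y, v⟫ • v‖ ^ 2 = ‖y‖ ^ 2 - ⟪y, v⟫ ^ 2 := by
      rw [norm_sub_sq_real, real_inner_smul_right, norm_smul, hv]
      simp [mul_pow]
      ring
    nlinarith [norm_nonneg (y - ⟪y, v⟫ • v), norm_nonneg y, sq_nonneg (⟪y, v⟫)]
  -- orthogonality of residuals
  have worth : ∀ y : EuclideanSpace ℝ (Fin d), ⟪y - ⟪y, v⟫ • v, v⟫ = 0 := by
    intro y
    have hvv : ⟪v, v⟫ = 1 := by
      rw [real_inner_self_eq_norm_mul_norm, hv]; ring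
    rw [inner_sub_left, real_inner_smul_left, hvv]; ring
  -- main claim: tangential components are bounded by M
  have hproj : ∀ i, i ≠ i0 → ‖(Y i - Y i0) - ⟪Y i - Y i0, v⟫ • v‖ ≤ M := by
    intro i hi
    by_contra hMw
    push_neg at hMw
    set x : EuclideanSpace ℝ (Fin d) := Y i - Y i0 with hxdef
    set w : EuclideanSpace ℝ (Fin d) := x - ⟪x, v⟫ • v with hwdef
    set c : ℝ := ‖w‖ - M with hcdef
    have hc : 0 < c := sub_pos.mpr hMw
    have hwpos : 0 < ‖w‖ := hM0.trans hMw
    have hwn0 : ‖w‖ ≠ 0 := hwpos.ne'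
    set u : EuclideanSpace ℝ (Fin d) := ‖w‖⁻¹ • w with hudef
    have hu : ‖u‖ = 1 := by
      rw [hudef, norm_smul, norm_inv, norm_norm, inv_mul_cancel₀ hwn0]
    have hvw : ⟪v, w⟫ = 0 := by
      rw [real_inner_comm]; exact worth x
    have hvu : ⟪v, u⟫ = 0 := by
      rw [hudef, real_inner_smul_right, hvw, mul_zero]
    set s : ℝ := min (1/2) (c / (2 * M * α)) with hsdef
    have hs0 : 0 < s := lt_min (by norm_num) (div_pos hc (mul_pos (mul_pos two_pos hM0) hα))
    have hs2 : s ≤ 1/2 := min_le_left _ _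
    have hα0 : α ≠ 0 := hα.ne'
    have hsα : α * s ≤ c / (2 * M) := by
      calc α * s ≤ α * (c / (2 * M * α)) :=
            mul_le_mul_of_nonneg_left (min_le_right _ _) hα.le
        _ = c / (2 * M) := by field_simp
    set r : ℝ := Real.sqrt (1 - s ^ 2) with hrdef
    have hs2' : s ^ 2 ≤ 1 / 4 := by nlinarith
    have hr2 : r ^ 2 = 1 - s ^ 2 := Real.sq_sqrt (by nlinarith)
    have hr0 : 0 < r := Real.sqrt_pos.mpr (by nlinarith)
    have hr1 : r ≤ 1 := by nlinarith [sq_nonneg (r - 1)]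
    have hrlb : 1 - s ^ 2 ≤ r := by nlinarith [mul_nonneg hr0.le (sub_nonneg.2 hr1)]
    set α' : ℝ := r * α + s * c / M with hα'def
    set v' : EuclideanSpace ℝ (Fin d) := r • v + s • u with hv'def
    have hv' : ‖v'‖ = 1 := by
      have h : ‖v'‖ ^ 2 = 1 := by
        rw [hv'def, norm_add_sq_real, real_inner_smul_left, real_inner_smul_right,
          norm_smul, norm_smul, hvu, hv, hu]
        rw [Real.norm_eq_abs, Real.norm_eq_abs, abs_of_pos hr0, abs_of_pos hs0]
        nlinarith
      nlinarith [norm_nonneg v']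
    have hsep' : ∀ j : Fin n, j ≠ i0 → α' * M ≤ ⟪Y j - Y i0, v'⟫ := by
      intro j hj
      set xj : EuclideanSpace ℝ (Fin d) := Y j - Y i0 with hxjdef
      set wj : EuclideanSpace ℝ (Fin d) := xj - ⟪xj, v⟫ • v with hwjdef
      -- ‖wj - w‖ ≤ M
      have hwjw : ‖wj - w‖ ≤ M := by
        have hinner : ⟪Y j - Y i, v⟫ = ⟪xj, v⟫ - ⟪x, v⟫ := by
          rw [hxjdef, hxdef, ← inner_sub_left]
          congr 1
          abel
        have heq : wj - w = (Y j - Y i) - ⟪Y j - Y i, v⟫ • v := by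
          rw [hinner, sub_smul, hwjdef, hwdef, hxjdef, hxdef]
          abel
        rw [heq]
        exact (resid _).trans (hdiam j hj i hi)
      -- ⟪xj, u⟫ ≥ c
      have hinner_u : c ≤ ⟪xj, u⟫ := by
        have hxju : ⟪xj, u⟫ = ‖w‖⁻¹ * ⟪xj, w⟫ := by
          rw [hudef, real_inner_smul_right]
        have hxjw : ⟪xj, w⟫ = ⟪wj, w⟫ := by
          rw [hwjdef, inner_sub_left xj (⟪xj, v⟫ • v) w, real_inner_smul_left v w ⟪xj, v⟫,
            hvw, mul_zero, sub_zero]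
        have hwjwlb : ‖w‖ ^ 2 - M * ‖w‖ ≤ ⟪wj, w⟫ := by
          have h1 : ⟪wj, w⟫ = ⟪w, w⟫ + ⟪wj - w, w⟫ := by
            rw [inner_sub_left wj w w]; ring
          have h2 : -(‖wj - w‖ * ‖w‖) ≤ ⟪wj - w, w⟫ :=
            neg_le_of_abs_le (abs_real_inner_le_norm _ _)
          have h3 : ⟪w, w⟫ = ‖w‖ ^ 2 := real_inner_self_eq_norm_sq w
          nlinarith [mul_le_mul_of_nonneg_right hwjw (norm_nonneg w)]
        rw [hxju, hxjw, le_inv_mul_iff₀ hwpos]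
        have hwc : ‖w‖ * c = ‖w‖ ^ 2 - M * ‖w‖ := by rw [hcdef]; ring
        linarith
      have ht : α * M ≤ ⟪xj, v⟫ := hsep j hj
      have hexp : ⟪xj, v'⟫ = r * ⟪xj, v⟫ + s * ⟪xj, u⟫ := by
        rw [hv'def, inner_add_right, real_inner_smul_right, real_inner_smul_right]
      have h1 : r * (α * M) ≤ r * ⟪xj, v⟫ := mul_le_mul_of_nonneg_left ht hr0.le
      have h2 : s * c ≤ s * ⟪xj, u⟫ := mul_le_mul_of_nonneg_left hinner_u hs0.le
      have h3 : (r * α + s * c / M) * M = r * (α * M) + s * c := by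
        field_simp
      rw [hexp, hα'def, h3]
      exact add_le_add h1 h2
    have hα'pos : 0 < α' := by
      rw [hα'def]
      exact add_pos (mul_pos hr0 hα) (div_pos (mul_pos hs0 hc) hM0)
    have hconf' : IsOutlierConfig Y i0 α' := ⟨hα'pos, v', hv', hsep'⟩
    have hle : α' ≤ α := hmax α' hconf'
    have hlt : α < α' := by
      rw [hα'def]
      have h1 : (1 - s ^ 2) * α ≤ r * α := mul_le_mul_of_nonneg_right hrlb hα.le
      have h2 : c / (2 * M) < c / M := by
        rw [div_lt_div_iff₀ (mul_pos two_pos hM0) hM0]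
        nlinarith [mul_pos hc hM0]
      have h3 : s * (c / (2 * M)) < s * (c / M) := mul_lt_mul_of_pos_left h2 hs0
      have h4 : α * s * s ≤ c / (2 * M) * s := mul_le_mul_of_nonneg_right hsα hs0.le
      have h5 : s * c / M = s * (c / M) := by ring
      nlinarith
    linarith
  -- finish
  have decomp : ∀ y : EuclideanSpace ℝ (Fin d),
      ‖y - ⟪y, v⟫ • v‖ ^ 2 = ‖y‖ ^ 2 - ⟪y, v⟫ ^ 2 := by
    intro y
    rw [norm_sub_sq_real, real_inner_smul_right, norm_smul, hv]
    simp [mul_pow]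
    ring
  refine ⟨v, hv, fun i hi => ?_⟩
  set x : EuclideanSpace ℝ (Fin d) := Y i - Y i0 with hxdef
  have hw : ‖x - ⟪x, v⟫ • v‖ ≤ M := hproj i hi
  have ht : α * M ≤ ⟪x, v⟫ := hsep i hi
  have ht0 : 0 ≤ ⟪x, v⟫ := le_trans (mul_nonneg hα.le hM0.le) ht
  have hxsq := decomp x
  have hsqrtpos : 0 < Real.sqrt (1 + α ^ 2) := Real.sqrt_pos.mpr (by positivity)
  have hsqrtsq : Real.sqrt (1 + α ^ 2) ^ 2 = 1 + α ^ 2 := Real.sq_sqrt (by positivity)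
  constructor
  · have h2 : α * ‖x - ⟪x, v⟫ • v‖ ≤ ⟪x, v⟫ :=
      le_trans (mul_le_mul_of_nonneg_left hw hα.le) ht
    have h3 : 0 ≤ α * ‖x - ⟪x, v⟫ • v‖ := mul_nonneg hα.le (norm_nonneg _)
    have hsq : (‖x‖ * α) ^ 2 ≤ (⟪x, v⟫ * Real.sqrt (1 + α ^ 2)) ^ 2 := by
      rw [mul_pow, mul_pow, hsqrtsq]
      nlinarith [mul_self_le_mul_self h3 h2, norm_nonneg (x - ⟪x, v⟫ • v)]
    have hle : ‖x‖ * α ≤ ⟪x, v⟫ * Real.sqrt (1 + α ^ 2) := by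
      have h1 := Real.sqrt_le_sqrt hsq
      rwa [Real.sqrt_sq (mul_nonneg (norm_nonneg _) hα.le),
        Real.sqrt_sq (mul_nonneg ht0 hsqrtpos.le)] at h1
    rw [mul_div_assoc', div_le_iff₀ hsqrtpos]
    exact hle
  · calc ⟪x, v⟫ ≤ ‖x‖ * ‖v‖ := real_inner_le_norm x v
      _ = ‖x‖ := by rw [hv, mul_one]

end TSNEPaper
end
end
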